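/- Let F be a field and M : Matrix (Fin m) (Fin n) F a matrix whose full family of columns is minimally dependent. Let d₁, d₂ : Fin m → F satisfy d₁ + d₂ = (column 0 of M). Define M' : Matrix (Fin (m+1)) (Fin (n+1)) F by: for i : Fin m, M' i 0 = d₁ i, M' i 1 = d₂ i, and M' i (j+2) = M i (j+1) for j+1 < n; and for the new last row r = m: M' r 0 = 1, M' r 1 = -1, and M' r (j+2) = 0. Then the full family of columns of M' is minimally dependent. -/

import Mathlib

/-- The full family of columns of a matrix `M : Matrix V E F` is *minimally dependent*
if it is linearly dependent but the columns indexed by any proper subset of `E` are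
linearly independent. -/
def MinimallyDependent {F V E : Type*} [Field F] (M : Matrix V E F) : Prop :=
  (¬ LinearIndependent F fun e : E => fun v => M v e) ∧
    ∀ S : Set E, S ⊂ Set.univ →
      LinearIndependent F fun e : S => fun v => M v e.1

/-- Compatible column splitting preserves minimal dependence: if column `0` of a
minimally dependent matrix `M` is split into two columns `d₁, d₂` with
`d₁ + d₂ = column 0`, a new row is appended with entries `1` and `-1` in the two new
columns and `0` elsewhere, then the resulting matrix `M'` is minimally dependent. -/
theorem minimallyDependent_of_compatible_column_splitting
    {F : Type*} [Field F] {m n : ℕ} (hn : 0 < n)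
    (M : Matrix (Fin m) (Fin n) F) (hM : MinimallyDependent M)
    (d₁ d₂ : Fin m → F) (hd : ∀ i : Fin m, d₁ i + d₂ i = M i ⟨0, hn⟩)
    (M' : Matrix (Fin (m + 1)) (Fin (n + 1)) F)
    (h0 : ∀ i : Fin m, M' i.castSucc ⟨0, by omega⟩ = d₁ i)
    (h1 : ∀ i : Fin m, M' i.castSucc ⟨1, by omega⟩ = d₂ i)
    (h2 : ∀ (i : Fin m) (j : ℕ) (hj : j + 1 < n),
      M' i.castSucc ⟨j + 2, by omega⟩ = M i ⟨j + 1, hj⟩)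
    (hr0 : M' (Fin.last m) ⟨0, by omega⟩ = 1)
    (hr1 : M' (Fin.last m) ⟨1, by omega⟩ = -1)
    (hr2 : ∀ (j : ℕ) (hj : j + 1 < n), M' (Fin.last m) ⟨j + 2, by omega⟩ = 0) :
    MinimallyDependent M' := by
  classical
  obtain ⟨N, rfl⟩ : ∃ N, n = N + 1 := ⟨n - 1, by omega⟩
  -- index normalizations
  have z2 : (⟨0, by omega⟩ : Fin (N + 2)) = 0 := by ext; simp
  have o2 : (⟨1, by omega⟩ : Fin (N + 2)) = 1 := by ext; simp
  have z1 : (⟨0, hn⟩ : Fin (N + 1)) = 0 := by ext; simp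
  have E0 : ∀ i : Fin m, M' i.castSucc 0 = d₁ i := fun i => by rw [← z2]; exact h0 i
  have E1 : ∀ i : Fin m, M' i.castSucc 1 = d₂ i := fun i => by rw [← o2]; exact h1 i
  have E2 : ∀ (i : Fin m) (j : Fin N), M' i.castSucc j.succ.succ = M i j.succ := by
    intro i j
    have hj : (j : ℕ) + 1 < N + 1 := by omega
    have := h2 i j hj
    convert this using 2 <;> ext <;> simp
  have L0 : M' (Fin.last m) 0 = 1 := by rw [← z2]; exact hr0
  have L1 : M' (Fin.last m) 1 = -1 := by rw [← o2]; exact hr1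
  have L2 : ∀ j : Fin N, M' (Fin.last m) j.succ.succ = 0 := by
    intro j
    have hj : (j : ℕ) + 1 < N + 1 := by omega
    have := hr2 j hj
    convert this using 2 <;> ext <;> simp
  -- splitting the sum over columns of M'
  have split : ∀ (b : Fin (N + 2) → F) (v : Fin (m + 1)),
      ∑ k, b k * M' v k
        = b 0 * M' v 0 + b 1 * M' v 1 + ∑ j : Fin N, b j.succ.succ * M' v j.succ.succ := by
    intro b v
    rw [Fin.sum_univ_succ (f := fun k => b k * M' v k),
      Fin.sum_univ_succ (f := fun k : Fin (N + 1) => b k.succ * M' v k.succ),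
      Fin.succ_zero_eq_one]
    ring
  -- the pull-back of a coefficient vector
  let pull : (Fin (N + 2) → F) → Fin (N + 1) → F :=
    fun b j => if (j : ℕ) = 0 then b 0 else b ⟨(j : ℕ) + 1, by omega⟩
  have pullval : ∀ (b : Fin (N + 2) → F) (j : Fin (N + 1)),
      pull b j = if (j : ℕ) = 0 then b 0 else b ⟨(j : ℕ) + 1, by omega⟩ := fun _ _ => rfl
  have p0 : ∀ b : Fin (N + 2) → F, pull b 0 = b 0 := by intro b; rw [pullval]; simp
  have ps : ∀ (b : Fin (N + 2) → F) (j : Fin N), pull b j.succ = b j.succ.succ := by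
    intro b j
    rw [pullval, if_neg (by simp)]
    congr 1
  have keyA : ∀ (b : Fin (N + 2) → F), b 0 = b 1 → ∀ i : Fin m,
      ∑ k, b k * M' i.castSucc k = ∑ j, pull b j * M i j := by
    intro b hb i
    have hM0 : M i 0 = d₁ i + d₂ i := by rw [← z1]; exact (hd i).symm
    rw [split, Fin.sum_univ_succ (f := fun j => pull b j * M i j)]
    simp only [E0, E1, E2, p0, ps]
    rw [hM0, ← hb]
    ring
  have keyB : ∀ b : Fin (N + 2) → F,
      ∑ k, b k * M' (Fin.last m) k = b 0 - b 1 := by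
    intro b
    rw [split]
    simp only [L0, L1, L2, mul_zero, mul_one, mul_neg]
    simp [sub_eq_add_neg]
  -- a relation of M with one vanishing coefficient is trivial
  have aux : ∀ (a : Fin (N + 1) → F), (∀ i, ∑ j, a j * M i j = 0) →
      ∀ j₀ : Fin (N + 1), a j₀ = 0 → ∀ j, a j = 0 := by
    intro a ha j₀ h₀
    have hS : ({j | j ≠ j₀} : Set (Fin (N + 1))) ⊂ Set.univ := by
      refine ⟨Set.subset_univ _, fun h => ?_⟩
      have := h (Set.mem_univ j₀)
      simp at this
    have li := hM.2 _ hS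
    haveI : Fintype ({j | j ≠ j₀} : Set (Fin (N + 1))) :=
      (Set.toFinite _).fintype
    rw [Fintype.linearIndependent_iff] at li
    have hz : ∑ e : ({j | j ≠ j₀} : Set (Fin (N + 1))),
        a e.1 • (fun v => M v e.1) = 0 := by
      have step1 : ∑ e : ({j | j ≠ j₀} : Set (Fin (N + 1))),
          a e.1 • (fun v => M v e.1)
          = ∑ k ∈ ({j | j ≠ j₀} : Set (Fin (N + 1))).toFinset,
              a k • (fun v => M v k) :=
        Finset.sum_set_coe (f := fun k => a k • (fun v => M v k)) _
      have step2 : ∑ k ∈ ({j | j ≠ j₀} : Set (Fin (N + 1))).toFinset,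
          a k • (fun v => M v k) = ∑ k, a k • (fun v => M v k) := by
        refine Finset.sum_subset (Finset.subset_univ _) ?_
        intro k _ hk
        have hkj : k = j₀ := by simpa using hk
        subst hkj
        rw [h₀, zero_smul]
      rw [step1, step2]
      funext i
      simpa using ha i
    intro j
    by_cases hj : j = j₀
    · rw [hj]; exact h₀
    · exact li _ hz ⟨j, hj⟩
  constructor
  · -- dependence of the columns of M'
    obtain ⟨g, hg, i₀, hi₀⟩ := Fintype.not_linearIndependent_iff.mp hM.1
    have hg' : ∀ i, ∑ j, g j * M i j = 0 := fun i => by simpa using congrFun hg i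
    let b : Fin (N + 2) → F :=
      fun k => if (k : ℕ) ≤ 1 then g 0 else g ⟨(k : ℕ) - 1, by omega⟩
    have bval : ∀ k, b k = if (k : ℕ) ≤ 1 then g 0 else g ⟨(k : ℕ) - 1, by omega⟩ :=
      fun _ => rfl
    have b0 : b 0 = g 0 := by rw [bval]; simp
    have b1 : b 1 = g 0 := by rw [bval]; simp
    have hpull : pull b = g := by
      funext j
      rw [pullval]
      by_cases hj : (j : ℕ) = 0
      · rw [if_pos hj, b0]
        congr 1
        ext; simp [hj]
      · rw [if_neg hj, bval, if_neg (by show ¬((j : ℕ) + 1 ≤ 1); omega)]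
        have hjj : (⟨(j : ℕ) + 1 - 1, by omega⟩ : Fin (N + 1)) = j := Fin.ext (by simp)
        rw [hjj]
    refine Fintype.not_linearIndependent_iff.mpr ⟨b, ?_, ?_⟩
    · funext v
      simp only [Finset.sum_apply, Pi.smul_apply, smul_eq_mul, Pi.zero_apply]
      induction v using Fin.lastCases with
      | last => rw [keyB, b0, b1, sub_self]
      | cast i => rw [keyA b (by rw [b0, b1]) i, hpull]; exact hg' i
    · by_cases h : (i₀ : ℕ) = 0
      · refine ⟨0, ?_⟩
        rw [b0]
        have : i₀ = 0 := by ext; simp [h]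
        rwa [this] at hi₀
      · refine ⟨⟨(i₀ : ℕ) + 1, by omega⟩, ?_⟩
        rw [bval, if_neg (by show ¬((i₀ : ℕ) + 1 ≤ 1); omega)]
        have : (⟨(i₀ : ℕ) + 1 - 1, by omega⟩ : Fin (N + 1)) = i₀ := by ext; simp
        rwa [this]
  · -- proper subfamilies of columns of M' are independent
    intro S hS
    haveI : Fintype S := (Set.toFinite S).fintype
    rw [Fintype.linearIndependent_iff]
    intro c hc
    let b : Fin (N + 2) → F := fun k => if h : k ∈ S then c ⟨k, h⟩ else 0
    have bval : ∀ k, b k = if h : k ∈ S then c ⟨k, h⟩ else 0 := fun _ => rfl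
    have hb : ∑ k, b k • (fun v => M' v k) = 0 := by
      have step1 : ∑ e : S, b e.1 • (fun v => M' v e.1)
          = ∑ k ∈ S.toFinset, b k • (fun v => M' v k) :=
        Finset.sum_set_coe (f := fun k => b k • (fun v => M' v k)) _
      have step2 : ∑ k ∈ S.toFinset, b k • (fun v => M' v k)
          = ∑ k, b k • (fun v => M' v k) := by
        refine Finset.sum_subset (Finset.subset_univ _) ?_
        intro k _ hk
        have hkS : k ∉ S := by simpa using hk
        rw [bval, dif_neg hkS, zero_smul]
      have step3 : ∑ e : S, b e.1 • (fun v => M' v e.1)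
          = ∑ e : S, c e • (fun v => M' v e.1) := by
        refine Finset.sum_congr rfl ?_
        intro e _
        rw [bval, dif_pos e.2]
      rw [← step2, ← step1, step3]
      exact hc
    have hb' : ∀ v, ∑ k, b k * M' v k = 0 := fun v => by simpa using congrFun hb v
    have hb01 : b 0 = b 1 := by
      have := hb' (Fin.last m)
      rw [keyB] at this
      exact sub_eq_zero.mp this
    have ha : ∀ i, ∑ j, pull b j * M i j = 0 := fun i => by
      rw [← keyA b hb01 i]; exact hb' i.castSucc
    obtain ⟨e₀, he₀⟩ : ∃ e₀ : Fin (N + 2), e₀ ∉ S := by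
      by_contra h
      push_neg at h
      exact hS.2 fun x _ => h x
    have hbe₀ : b e₀ = 0 := by rw [bval, dif_neg he₀]
    have hj₀ : ∃ j₀, pull b j₀ = 0 := by
      by_cases h : (e₀ : ℕ) ≤ 1
      · refine ⟨0, ?_⟩
        rw [p0]
        rcases Nat.lt_or_ge (e₀ : ℕ) 1 with h' | h'
        · have : e₀ = 0 := by ext; show (e₀ : ℕ) = 0; omega
          rwa [this] at hbe₀
        · have he1 : e₀ = 1 := by ext; show (e₀ : ℕ) = 1; omega
          rw [hb01]
          rwa [he1] at hbe₀
      · refine ⟨⟨(e₀ : ℕ) - 1, by omega⟩, ?_⟩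
        rw [pullval, if_neg (by simp; omega)]
        have : (⟨(e₀ : ℕ) - 1 + 1, by omega⟩ : Fin (N + 2)) = e₀ := by ext; simp; omega
        rwa [this]
    obtain ⟨j₀, hj₀⟩ := hj₀
    have hall : ∀ j, pull b j = 0 := aux (pull b) ha j₀ hj₀
    have hball : ∀ k, b k = 0 := by
      intro k
      by_cases hk0 : (k : ℕ) = 0
      · have : k = 0 := by ext; simp [hk0]
        rw [this, ← p0 b]
        exact hall 0
      by_cases hk1 : (k : ℕ) = 1
      · have : k = 1 := by ext; simp [hk1]
        rw [this, ← hb01, ← p0 b]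
        exact hall 0
      · have hk2 : 2 ≤ (k : ℕ) := by omega
        have hlt : (k : ℕ) - 1 < N + 1 := by omega
        have := hall ⟨(k : ℕ) - 1, hlt⟩
        rw [pullval, if_neg (by simp; omega)] at this
        have hkk : (⟨(k : ℕ) - 1 + 1, by omega⟩ : Fin (N + 2)) = k := by ext; simp; omega
        rwa [hkk] at this
    intro e
    have : c e = b e.1 := by rw [bval, dif_pos e.2]
    rw [this]
    exact hball e.1
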